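/- arXiv:1905.11816 — 3 statements merged into one kernel-verified Lean document; each statement's English description precedes it below -/
import Mathlib

section
/- Let f : [m, M] → ℝ be a concave function with m < M, and define β(m,M,f) = min_{t ∈ [m,M]} ( (f(M)-f(m))/(M-m) · (t-m) + f(m) - f(t) ). Then for all a, b ∈ [m,M] and v ∈ [0,1], β(m,M,f) ≤ (1-v)f(a) + v f(b) - f((1-v)a + v b) ≤ 0 ≤ -β(m,M,f). -/
theorem concave_jensen_gap_bounds (m M : ℝ) (hmM : m < M) (f : ℝ → ℝ)
    (hf : ConcaveOn ℝ (Set.Icc m M) f)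
    (β : ℝ)
    (hβ : β = sInf ((fun t => (f M - f m) / (M - m) * (t - m) + f m - f t) '' Set.Icc m M))
    (a b : ℝ) (ha : a ∈ Set.Icc m M) (hb : b ∈ Set.Icc m M)
    (v : ℝ) (hv : v ∈ Set.Icc (0:ℝ) 1) :
    β ≤ (1-v) * f a + v * f b - f ((1-v) * a + v * b) ∧
      (1-v) * f a + v * f b - f ((1-v) * a + v * b) ≤ 0 ∧ (0:ℝ) ≤ -β := by
  have hMm : (0:ℝ) < M - m := by linarith
  obtain ⟨ham, haM⟩ := ha
  obtain ⟨hbm, hbM⟩ := hb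
  obtain ⟨hv0, hv1⟩ := hv
  have hmem : m ∈ Set.Icc m M := ⟨le_refl m, le_of_lt hmM⟩
  have hMem : M ∈ Set.Icc m M := ⟨le_of_lt hmM, le_refl M⟩
  -- chord lemma : f is above its chord
  have chord : ∀ t ∈ Set.Icc m M, (f M - f m) / (M - m) * (t - m) + f m ≤ f t := by
    intro t ⟨htm, htM⟩
    set l := (t - m) / (M - m) with hl
    have hl0 : 0 ≤ l := div_nonneg (by linarith) hMm.le
    have hl1 : l ≤ 1 := by rw [hl, div_le_one hMm]; linarith
    have key := hf.2 hmem hMem (by linarith : (0:ℝ) ≤ 1 - l) hl0 (by ring)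
    simp only [smul_eq_mul] at key
    have ht : (1 - l) * m + l * M = t := by
      rw [hl]; field_simp; ring
    rw [ht] at key
    have hch : (f M - f m) / (M - m) * (t - m) = l * (f M - f m) := by
      rw [hl]; field_simp
    nlinarith [key]
  -- chord is at least min (f m) (f M)
  have chord_ge : ∀ t ∈ Set.Icc m M,
      min (f m) (f M) ≤ (f M - f m) / (M - m) * (t - m) + f m := by
    intro t ⟨htm, htM⟩
    have hl0 : 0 ≤ (t - m) / (M - m) := div_nonneg (by linarith) hMm.le
    have hl1 : (t - m) / (M - m) ≤ 1 := by rw [div_le_one hMm]; linarith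
    have hch : (f M - f m) / (M - m) * (t - m) = (t - m) / (M - m) * (f M - f m) := by
      field_simp
    rcases le_total (f m) (f M) with h | h
    · rw [min_eq_left h]; nlinarith
    · rw [min_eq_right h]; nlinarith
  -- upper bound on f via concavity (reflection trick)
  have fub : ∀ t ∈ Set.Icc m M, f t ≤ 2 * f ((m + M) / 2) - min (f m) (f M) := by
    intro t ht
    obtain ⟨htm, htM⟩ := ht
    have ht' : m + M - t ∈ Set.Icc m M := ⟨by linarith, by linarith⟩
    have key := hf.2 (show t ∈ Set.Icc m M from ⟨htm, htM⟩) ht'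
      (by norm_num : (0:ℝ) ≤ 1/2) (by norm_num : (0:ℝ) ≤ 1/2) (by norm_num)
    simp only [smul_eq_mul] at key
    have hmid : (1:ℝ)/2 * t + 1/2 * (m + M - t) = (m + M) / 2 := by ring
    rw [hmid] at key
    have h1 := chord_ge (m + M - t) ht'
    have h2 := chord (m + M - t) ht'
    linarith
  -- the gap function set is bounded below
  have hbdd : BddBelow ((fun t => (f M - f m) / (M - m) * (t - m) + f m - f t) '' Set.Icc m M) := by
    refine ⟨2 * min (f m) (f M) - 2 * f ((m + M) / 2), ?_⟩
    rintro x ⟨t, ht, rfl⟩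
    have h1 := chord_ge t ht
    have h2 := fub t ht
    simp only
    linarith
  -- membership of the point c
  set c := (1 - v) * a + v * b with hc
  have hcmem : c ∈ Set.Icc m M := by
    constructor <;> nlinarith
  have hgc : (f M - f m) / (M - m) * (c - m) + f m - f c ∈
      ((fun t => (f M - f m) / (M - m) * (t - m) + f m - f t) '' Set.Icc m M) :=
    ⟨c, hcmem, rfl⟩
  have hβle : β ≤ (f M - f m) / (M - m) * (c - m) + f m - f c := by
    rw [hβ]; exact csInf_le hbdd hgc
  -- middle inequality from concavity
  have key := hf.2 ⟨ham, haM⟩ ⟨hbm, hbM⟩ (by linarith : (0:ℝ) ≤ 1 - v) hv0 (by ring)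
  simp only [smul_eq_mul] at key
  -- β ≤ gap
  have h1 := mul_le_mul_of_nonneg_left (chord a ⟨ham, haM⟩) (by linarith : (0:ℝ) ≤ 1 - v)
  have h2 := mul_le_mul_of_nonneg_left (chord b ⟨hbm, hbM⟩) hv0
  have hcomb : (1 - v) * ((f M - f m) / (M - m) * (a - m) + f m)
      + v * ((f M - f m) / (M - m) * (b - m) + f m)
      = (f M - f m) / (M - m) * (c - m) + f m := by
    rw [hc]; ring
  have hchordc := chord c hcmem
  refine ⟨by linarith, by linarith, ?_⟩
  -- 0 ≤ -β : β ≤ g(c) ≤ 0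
  have : (f M - f m) / (M - m) * (c - m) + f m - f c ≤ 0 := by linarith
  linarith
end

section
/- Let f : [m,M] → ℝ be concave with m < M, a, b ∈ [m,M], v ∈ [0,1]. Then f((1-v)a + v b) ≤ (1-v)f(a) + v f(b) + 2β̃(m,M,f), where β̃(m,M,f) = max_{t∈[m,M]} ( f(t) - (f(M)-f(m))/(M-m)·(t-m) - f(m) ). -/
theorem concave_additive_reverse_jensen (m M : ℝ) (hmM : m < M) (f : ℝ → ℝ)
    (hf : ConcaveOn ℝ (Set.Icc m M) f)
    (a b v : ℝ) (ha : a ∈ Set.Icc m M) (hb : b ∈ Set.Icc m M)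
    (hv : v ∈ Set.Icc (0:ℝ) 1)
    (βt : ℝ)
    (hβt : βt = sSup ((fun t => f t - (f M - f m) / (M - m) * (t - m) - f m) '' Set.Icc m M)) :
    f ((1-v) * a + v * b) ≤ (1-v) * f a + v * f b + 2 * βt := by
  obtain ⟨hv0, hv1⟩ := hv
  set s := (f M - f m) / (M - m) with hs
  set g : ℝ → ℝ := fun t => f t - s * (t - m) - f m with hgdef
  have hMm : (0:ℝ) < M - m := by linarith
  have hgm : g m = 0 := by simp [hgdef]
  have hgM : g M = 0 := by
    have h1 : s * (M - m) = f M - f m := by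
      rw [hs]; field_simp
    simp only [hgdef]
    linarith
  have hgconc : ConcaveOn ℝ (Set.Icc m M) g := by
    refine ⟨hf.1, ?_⟩
    intro x hx y hy p q hp hq hpq
    have h := hf.2 hx hy hp hq hpq
    have hq' : q = 1 - p := by linarith
    subst hq'
    simp only [hgdef, smul_eq_mul] at h ⊢
    nlinarith [h]
  -- nonnegativity of g on [m,M]
  have hnn : ∀ t ∈ Set.Icc m M, 0 ≤ g t := by
    intro t ht
    obtain ⟨htm, htM⟩ := ht
    have hp0 : 0 ≤ (M - t) / (M - m) := div_nonneg (by linarith) hMm.le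
    have hq0 : 0 ≤ (t - m) / (M - m) := div_nonneg (by linarith) hMm.le
    have hpq : (M - t) / (M - m) + (t - m) / (M - m) = 1 := by
      field_simp; ring
    have h := hgconc.2 (Set.left_mem_Icc.2 hmM.le) (Set.right_mem_Icc.2 hmM.le) hp0 hq0 hpq
    simp only [smul_eq_mul] at h
    have hcomb : (M - t) / (M - m) * m + (t - m) / (M - m) * M = t := by
      field_simp; ring
    rw [hcomb, hgm, hgM] at h
    simp only [mul_zero, add_zero, zero_add] at h
    exact h
  -- boundedness above of the image
  have hBdd : BddAbove (g '' Set.Icc m M) := by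
    refine ⟨2 * max (g ((m + M) / 2)) 0, ?_⟩
    rintro y ⟨t, ht, rfl⟩
    set c : ℝ := (m + M) / 2 with hc
    have hmc : m < c := by rw [hc]; linarith
    have hcM : c < M := by rw [hc]; linarith
    by_cases hgt : g t ≤ 0
    · have : (0:ℝ) ≤ max (g c) 0 := le_max_right _ _
      linarith
    push_neg at hgt
    obtain ⟨htm, htM⟩ := ht
    rcases le_or_gt t c with htc | htc
    · have hMt : 0 < M - t := by linarith
      set p : ℝ := (M - c) / (M - t) with hp
      have hp2 : 1/2 ≤ p := by
        rw [hp, le_div_iff₀ hMt, hc]; linarith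
      have hp1 : p ≤ 1 := by
        rw [hp, div_le_one hMt]; linarith
      have hp0 : 0 ≤ p := by linarith
      have hq0 : 0 ≤ 1 - p := by linarith
      have h := hgconc.2 (Set.mem_Icc.2 ⟨htm, htM⟩) (Set.right_mem_Icc.2 hmM.le)
        hp0 hq0 (by ring)
      simp only [smul_eq_mul] at h
      have hcomb : p * t + (1 - p) * M = c := by
        rw [hp]; field_simp; ring
      rw [hcomb, hgM] at h
      have hmax : g c ≤ max (g c) 0 := le_max_left _ _
      nlinarith [mul_nonneg (by linarith : (0:ℝ) ≤ p - 1/2) hgt.le]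
    · have htm' : 0 < t - m := by linarith
      set p : ℝ := (c - m) / (t - m) with hp
      have hp2 : 1/2 ≤ p := by
        rw [hp, le_div_iff₀ htm', hc]; linarith
      have hp1 : p ≤ 1 := by
        rw [hp, div_le_one htm']; linarith
      have hp0 : 0 ≤ p := by linarith
      have hq0 : 0 ≤ 1 - p := by linarith
      have h := hgconc.2 (Set.mem_Icc.2 ⟨htm, htM⟩) (Set.left_mem_Icc.2 hmM.le)
        hp0 hq0 (by ring)
      simp only [smul_eq_mul] at h
      have hcomb : p * t + (1 - p) * m = c := by
        rw [hp]; field_simp; ring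
      rw [hcomb, hgm] at h
      have hmax : g c ≤ max (g c) 0 := le_max_left _ _
      nlinarith [mul_nonneg (by linarith : (0:ℝ) ≤ p - 1/2) hgt.le]
  -- βt ≥ 0
  have hβ0 : 0 ≤ βt := by
    rw [hβt]
    have : g m ∈ g '' Set.Icc m M := ⟨m, Set.left_mem_Icc.2 hmM.le, rfl⟩
    have := le_csSup hBdd this
    rw [hgm] at this
    exact this
  -- the combination lies in [m,M]
  have hx : (1 - v) * a + v * b ∈ Set.Icc m M := by
    constructor
    · nlinarith [ha.1, hb.1]
    · nlinarith [ha.2, hb.2]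
  have hgx : g ((1 - v) * a + v * b) ≤ βt := by
    rw [hβt]
    exact le_csSup hBdd ⟨_, hx, rfl⟩
  have hga := hnn a ha
  have hgb := hnn b hb
  simp only [hgdef] at hgx hga hgb
  nlinarith [mul_nonneg (by linarith : (0:ℝ) ≤ 1 - v) hga, mul_nonneg hv0 hgb]
end

section
/- Let A be an n×n Hermitian complex matrix with all eigenvalues in an interval J, let f : J → ℝ be concave, and let x ∈ ℂⁿ be a unit vector. Then ⟨f(A)x, x⟩ ≤ f(⟨Ax, x⟩), where f(A) is defined by the functional calculus (applying f to the eigenvalues in a spectral decomposition of A). -/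
open Matrix in
theorem operator_jensen_vector_state (n : ℕ) (J : Set ℝ)
    (A : Matrix (Fin n) (Fin n) ℂ) (hA : A.IsHermitian)
    (hspec : ∀ i, hA.eigenvalues i ∈ J)
    (f : ℝ → ℝ) (hf : ConcaveOn ℝ J f)
    (x : Fin n → ℂ) (hx : star x ⬝ᵥ x = 1) :
    (star x ⬝ᵥ (hA.cfc f *ᵥ x)).re ≤ f ((star x ⬝ᵥ (A *ᵥ x)).re) := by
  set U : Matrix (Fin n) (Fin n) ℂ := (hA.eigenvectorUnitary : Matrix (Fin n) (Fin n) ℂ) with hU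
  set y : Fin n → ℂ := star U *ᵥ x with hy
  have key : ∀ g : Fin n → ℝ,
      star x ⬝ᵥ ((U * diagonal ((↑) ∘ g) * star U) *ᵥ x)
        = ∑ i, (g i : ℂ) * (star y i * y i) := by
    intro g
    rw [← mulVec_mulVec, ← mulVec_mulVec, dotProduct_mulVec, ← star_star (star x ᵥ* U)]
    have h1 : star (star x ᵥ* U) = star U *ᵥ x := by
      rw [star_vecMul, star_star, star_eq_conjTranspose]
    rw [h1, ← hy]
    simp only [dotProduct, mulVec_diagonal, Function.comp, Pi.star_apply]
    exact Finset.sum_congr rfl fun i _ => by ring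
  have hyy : ∑ i, star y i * y i = 1 := by
    have h2 : star y = star x ᵥ* U := by
      rw [hy, star_mulVec, star_eq_conjTranspose, conjTranspose_conjTranspose]
    have : star y ⬝ᵥ y = 1 := by
      rw [h2, hy, ← dotProduct_mulVec, mulVec_mulVec,
        (Matrix.mem_unitaryGroup_iff).mp (hA.eigenvectorUnitary).2, one_mulVec, hx]
    simpa [dotProduct] using this
  -- real weights
  set w : Fin n → ℝ := fun i => Complex.normSq (y i) with hw
  have hsy : ∀ i, star y i * y i = (w i : ℂ) := fun i => by
    simp [hw, Complex.normSq_eq_conj_mul_self]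
  have hsum : ∑ i, w i = 1 := by
    have := hyy
    simp_rw [hsy] at this
    exact_mod_cast (by push_cast at this ⊢; exact_mod_cast congrArg Complex.re this)
  have hL : (star x ⬝ᵥ (hA.cfc f *ᵥ x)).re = ∑ i, w i * f (hA.eigenvalues i) := by
    rw [Matrix.IsHermitian.cfc, Unitary.conjStarAlgAut_apply, ← hU]
    rw [show (RCLike.ofReal ∘ f ∘ hA.eigenvalues : Fin n → ℂ) = ((↑) ∘ (f ∘ hA.eigenvalues)) from rfl,
      key (f ∘ hA.eigenvalues)]
    simp_rw [hsy]
    simp [Finset.sum_congr rfl fun i _ => mul_comm ((f (hA.eigenvalues i) : ℂ)) ((w i : ℂ))]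
  have hR : (star x ⬝ᵥ (A *ᵥ x)).re = ∑ i, w i * hA.eigenvalues i := by
    conv_lhs => rw [hA.spectral_theorem]
    rw [Unitary.conjStarAlgAut_apply, ← hU]
    rw [show (RCLike.ofReal ∘ hA.eigenvalues : Fin n → ℂ) = ((↑) ∘ hA.eigenvalues) from rfl,
      key hA.eigenvalues]
    simp_rw [hsy]
    simp [Finset.sum_congr rfl fun i _ => mul_comm ((hA.eigenvalues i : ℂ)) ((w i : ℂ))]
  rw [hL, hR]
  exact hf.le_map_sum (fun i _ => Complex.normSq_nonneg _) (by simpa using hsum)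
    (fun i _ => hspec i)
end
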